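/- Lemma 2 (probabilistic form, univariate): let ψ > 0 and d, μ ∈ ℝ. Let T be a random variable with the standard half-normal distribution (density t ↦ 2·φ(t;0,1) on t > 0 and 0 otherwise), independent of a random variable R with the normal N(0, ψ) distribution. Then Y = μ + d·T + R has density y ↦ 2·φ(y; μ, ψ+d²)·Φ( d·(y−μ) / √(ψ·(ψ+d²)) ) with respect to Lebesgue measure. -/

import Mathlib

open MeasureTheory ProbabilityTheory Real

/-- The standard normal density `φ(w) = (2π)^{-1/2} exp(-w²/2)`. -/
noncomputable def stdNormalPDF (w : ℝ) : ℝ := (2 * π) ^ (-(1 : ℝ) / 2) * Real.exp (-w ^ 2 / 2)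

/-- The standard normal distribution function `Φ(x) = ∫_{-∞}^x φ(u) du`. -/
noncomputable def stdNormalCDF (x : ℝ) : ℝ := ∫ u in Set.Iic x, stdNormalPDF u

/-- The normal density with mean `m` and variance `s2 > 0`:
`φ(x; m, s²) = (2πs²)^{-1/2} exp(-(x−m)²/(2s²))`. -/
noncomputable def normalPDF (m s2 x : ℝ) : ℝ :=
  (2 * π * s2) ^ (-(1 : ℝ) / 2) * Real.exp (-(x - m) ^ 2 / (2 * s2))

open Set
open scoped ENNReal

lemma rpow_neg_half_eq (x : ℝ) (hx : 0 ≤ x) : x ^ (-(1:ℝ)/2) = (Real.sqrt x)⁻¹ := by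
  rw [neg_div, Real.rpow_neg hx, Real.sqrt_eq_rpow]

lemma normalPDF_eq (m s2 x : ℝ) (hs : 0 ≤ s2) :
    normalPDF m s2 x = (Real.sqrt (2 * π * s2))⁻¹ * Real.exp (-(x - m) ^ 2 / (2 * s2)) := by
  rw [normalPDF, rpow_neg_half_eq]
  positivity

lemma normalPDF_nonneg (m s2 x : ℝ) (hs : 0 ≤ s2) : 0 ≤ normalPDF m s2 x := by
  rw [normalPDF_eq m s2 x hs]; positivity

lemma stdNormalPDF_eq (w : ℝ) :
    stdNormalPDF w = (Real.sqrt (2 * π))⁻¹ * Real.exp (-w ^ 2 / 2) := by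
  rw [stdNormalPDF, rpow_neg_half_eq]
  positivity

lemma measurable_normalPDF (m s2 : ℝ) : Measurable (normalPDF m s2) := by
  unfold normalPDF; fun_prop

set_option maxHeartbeats 1000000 in
lemma integrable_normalPDF (m s2 : ℝ) (hs : 0 < s2) : Integrable (normalPDF m s2) := by
  have hb : 0 < (2 * s2)⁻¹ := by positivity
  have h : Integrable (fun x : ℝ => Real.exp (-(2 * s2)⁻¹ * (x - m) ^ 2)) :=
    (integrable_exp_neg_mul_sq hb).comp_sub_right m
  have h2 := h.const_mul ((2 * π * s2) ^ (-(1:ℝ)/2))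
  have heq : normalPDF m s2
      = fun x => ((2 * π * s2) ^ (-(1:ℝ)/2)) * Real.exp (-(2 * s2)⁻¹ * (x - m) ^ 2) := by
    funext x
    rw [normalPDF]
    congr 1
    ring
  rw [heq]
  exact h2

lemma gaussian_product (ψ d a t : ℝ) (hψ : 0 < ψ) :
    normalPDF 0 1 t * normalPDF 0 ψ (a - d * t)
      = normalPDF 0 (ψ + d ^ 2) a * normalPDF (a * d / (ψ + d ^ 2)) (ψ / (ψ + d ^ 2)) t := by
  have hs : 0 < ψ + d ^ 2 := by positivity
  have hπ : 0 < π := Real.pi_pos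
  rw [normalPDF_eq _ _ _ (by norm_num : (0:ℝ) ≤ 1), normalPDF_eq _ _ _ hψ.le,
    normalPDF_eq _ _ _ hs.le, normalPDF_eq _ _ _ (by positivity)]
  rw [mul_mul_mul_comm, mul_mul_mul_comm ((Real.sqrt (2*π*(ψ+d^2)))⁻¹), ← Real.exp_add,
    ← Real.exp_add, ← mul_inv, ← mul_inv, ← Real.sqrt_mul (by positivity),
    ← Real.sqrt_mul (by positivity)]
  have h1 : 2 * π * 1 * (2 * π * ψ) = 2 * π * (ψ + d ^ 2) * (2 * π * (ψ / (ψ + d ^ 2))) := by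
    field_simp
  have h2 : -(t - 0) ^ 2 / (2 * 1) + -(a - d * t - 0) ^ 2 / (2 * ψ)
      = -(a - 0) ^ 2 / (2 * (ψ + d ^ 2))
        + -(t - a * d / (ψ + d ^ 2)) ^ 2 / (2 * (ψ / (ψ + d ^ 2))) := by
    field_simp
    ring
  rw [h1, h2]

lemma setIntegral_Iic_add (f : ℝ → ℝ) (c : ℝ) :
    ∫ x in Iic (0:ℝ), f (c + x) = ∫ u in Iic c, f u := by
  have he : MeasurableEmbedding (fun x : ℝ => c + x) :=
    (MeasurableEquiv.addLeft c).measurableEmbedding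
  have h := he.setIntegral_map (μ := (volume : Measure ℝ)) f (Iic c)
  rw [map_add_left_eq_self (volume : Measure ℝ) c] at h
  have hset : (fun x : ℝ => c + x) ⁻¹' Iic c = Iic 0 := by ext x; simp
  rw [hset] at h
  exact h.symm

lemma normalPDF_scale (m s2 t : ℝ) (hs : 0 < s2) :
    normalPDF m s2 t = (Real.sqrt s2)⁻¹ * stdNormalPDF ((m - t) / Real.sqrt s2) := by
  rw [normalPDF_eq _ _ _ hs.le, stdNormalPDF_eq]
  rw [Real.sqrt_mul (by positivity) s2, mul_inv, mul_comm ((Real.sqrt (2*π))⁻¹), mul_assoc]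
  congr 2
  rw [div_pow, Real.sq_sqrt hs.le]
  field_simp
  ring

lemma integral_Ioi_normalPDF (m s2 : ℝ) (hs : 0 < s2) :
    ∫ t in Ioi (0:ℝ), normalPDF m s2 t = stdNormalCDF (m / Real.sqrt s2) := by
  have hss : 0 < Real.sqrt s2 := Real.sqrt_pos.mpr hs
  set s := Real.sqrt s2 with hsdef
  have h1 : ∀ t : ℝ, normalPDF m s2 t = s⁻¹ * (fun x => stdNormalPDF (m / s + -x)) (t * s⁻¹) := by
    intro t
    rw [normalPDF_scale m s2 t hs]
    congr 2
    field_simp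
    ring
  rw [MeasureTheory.setIntegral_congr_fun measurableSet_Ioi (fun t _ => h1 t),
    MeasureTheory.integral_const_mul,
    integral_comp_mul_right_Ioi (fun x => stdNormalPDF (m / s + -x)) 0 (inv_pos.mpr hss)]
  rw [zero_mul, smul_eq_mul, inv_inv, ← mul_assoc, inv_mul_cancel₀ hss.ne', one_mul]
  rw [integral_comp_neg_Ioi 0 (fun x => stdNormalPDF (m / s + x)), neg_zero]
  rw [setIntegral_Iic_add stdNormalPDF (m / s)]
  rfl

lemma half_density_eq (ψ d : ℝ) (hψ : 0 < ψ) (a : ℝ) :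
    ∫⁻ t, ENNReal.ofReal ((if 0 < t then 2 * normalPDF 0 1 t else 0) * normalPDF 0 ψ (a - d * t))
      = ENNReal.ofReal (2 * normalPDF 0 (ψ + d ^ 2) a *
          stdNormalCDF (d * a / Real.sqrt (ψ * (ψ + d ^ 2)))) := by
  have hs : 0 < ψ + d ^ 2 := by positivity
  set K := normalPDF 0 (ψ + d ^ 2) a with hK
  set m' := a * d / (ψ + d ^ 2) with hm'
  set v' := ψ / (ψ + d ^ 2) with hv'
  have hv : 0 < v' := by positivity
  have hpt : ∀ t : ℝ,
      ENNReal.ofReal ((if 0 < t then 2 * normalPDF 0 1 t else 0) * normalPDF 0 ψ (a - d * t))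
        = (Ioi (0:ℝ)).indicator (fun t => ENNReal.ofReal (2 * K * normalPDF m' v' t)) t := by
    intro t
    by_cases ht : 0 < t
    · rw [if_pos ht, indicator_of_mem (mem_Ioi.mpr ht)]
      congr 1
      rw [mul_assoc, gaussian_product ψ d a t hψ, hK, hm', hv']
      ring
    · rw [if_neg ht, indicator_of_notMem (by simpa using ht), zero_mul, ENNReal.ofReal_zero]
  simp_rw [hpt]
  rw [lintegral_indicator measurableSet_Ioi _]
  rw [← ofReal_integral_eq_lintegral_ofReal
    (((integrable_normalPDF m' v' hv).const_mul (2 * K)).restrict)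
    (Filter.Eventually.of_forall fun t => by
      have := normalPDF_nonneg m' v' t hv.le
      have := normalPDF_nonneg 0 (ψ + d ^ 2) a hs.le
      positivity)]
  congr 1
  rw [MeasureTheory.integral_const_mul, integral_Ioi_normalPDF m' v' hv]
  have hkey : m' / Real.sqrt v' = d * a / Real.sqrt (ψ * (ψ + d ^ 2)) := by
    rw [hm', hv', Real.sqrt_div hψ.le, Real.sqrt_mul hψ.le]
    have h1 : 0 < Real.sqrt ψ := Real.sqrt_pos.mpr hψ
    have h2 : 0 < Real.sqrt (ψ + d ^ 2) := Real.sqrt_pos.mpr hs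
    rw [div_div_div_eq]
    rw [show a * d * Real.sqrt (ψ + d ^ 2) / ((ψ + d ^ 2) * Real.sqrt ψ)
        = a * d * Real.sqrt (ψ + d ^ 2)
          / (Real.sqrt (ψ + d ^ 2) * Real.sqrt (ψ + d ^ 2) * Real.sqrt ψ) from by
      rw [Real.mul_self_sqrt hs.le]]
    rw [mul_comm d a]
    field_simp
  rw [hkey]

/-- Lemma 2 (probabilistic form, univariate): for `ψ > 0`, if `T` is standard half-normal,
independent of `R ~ N(0, ψ)`, then `Y = μ + d·T + R` has density
`y ↦ 2·φ(y; μ, ψ+d²)·Φ(d·(y−μ)/√(ψ·(ψ+d²)))` with respect to Lebesgue measure. -/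
theorem skewNormal_marginal_law
    {Ω : Type*} [MeasurableSpace Ω] (P : Measure Ω) [IsProbabilityMeasure P]
    (ψ d μ : ℝ) (hψ : 0 < ψ)
    (T R : Ω → ℝ) (hT : Measurable T) (hR : Measurable R)
    (hindep : IndepFun T R P)
    (hlawT : Measure.map T P =
      volume.withDensity (fun t => ENNReal.ofReal (if 0 < t then 2 * normalPDF 0 1 t else 0)))
    (hlawR : Measure.map R P =
      volume.withDensity (fun r => ENNReal.ofReal (normalPDF 0 ψ r))) :
    Measure.map (fun ω => μ + d * T ω + R ω) P =
      volume.withDensity (fun y =>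
        ENNReal.ofReal (2 * normalPDF μ (ψ + d ^ 2) y *
          stdNormalCDF (d * (y - μ) / Real.sqrt (ψ * (ψ + d ^ 2))))) := by
  classical
  have hs : 0 < ψ + d ^ 2 := by positivity
  set fT : ℝ → ℝ≥0∞ := fun t => ENNReal.ofReal (if 0 < t then 2 * normalPDF 0 1 t else 0)
    with hfT
  set fR : ℝ → ℝ≥0∞ := fun r => ENNReal.ofReal (normalPDF 0 ψ r) with hfR
  have hmT : Measurable fT := by
    apply Measurable.ennreal_ofReal
    exact Measurable.ite (measurableSet_lt measurable_const measurable_id)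
      ((measurable_normalPDF 0 1).const_mul 2) measurable_const
  have hmR : Measurable fR := (measurable_normalPDF 0 ψ).ennreal_ofReal
  have hg : Measurable (fun p : ℝ × ℝ => μ + d * p.1 + p.2) := by fun_prop
  have hprod : Measure.map (fun ω => (T ω, R ω)) P = (Measure.map T P).prod (Measure.map R P) :=
    (indepFun_iff_map_prod_eq_prod_map_map hT.aemeasurable hR.aemeasurable).mp hindep
  have hcomp : Measure.map (fun ω => μ + d * T ω + R ω) P
      = Measure.map (fun p : ℝ × ℝ => μ + d * p.1 + p.2) (Measure.map (fun ω => (T ω, R ω)) P) := by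
    rw [Measure.map_map hg (hT.prodMk hR)]
    rfl
  haveI hPT : IsProbabilityMeasure (volume.withDensity fT) := by
    rw [← hlawT]; exact Measure.isProbabilityMeasure_map hT.aemeasurable
  haveI hPR : IsProbabilityMeasure (volume.withDensity fR) := by
    rw [← hlawR]; exact Measure.isProbabilityMeasure_map hR.aemeasurable
  rw [hcomp, hprod, hlawT, hlawR]
  ext A hA
  rw [Measure.map_apply hg hA, Measure.prod_apply (hg hA), withDensity_apply _ hA]
  rw [lintegral_withDensity_eq_lintegral_mul volume hmT (measurable_measure_prodMk_left (hg hA))]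
  have hinner : ∀ t : ℝ,
      (volume.withDensity fR) (Prod.mk t ⁻¹' ((fun p : ℝ × ℝ => μ + d * p.1 + p.2) ⁻¹' A))
        = ∫⁻ y, A.indicator 1 y * fR (y - (μ + d * t)) := by
    intro t
    have hms : MeasurableSet ((fun r : ℝ => μ + d * t + r) ⁻¹' A) :=
      (measurable_const.add measurable_id) hA
    have hset : Prod.mk t ⁻¹' ((fun p : ℝ × ℝ => μ + d * p.1 + p.2) ⁻¹' A)
        = (fun r : ℝ => μ + d * t + r) ⁻¹' A := rfl
    rw [hset, withDensity_apply _ hms, ← lintegral_indicator hms _]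
    rw [← lintegral_add_right_eq_self
      (fun y => A.indicator 1 y * fR (y - (μ + d * t))) (μ + d * t)]
    apply lintegral_congr
    intro r
    have harg : r + (μ + d * t) = μ + d * t + r := by ring
    by_cases h : μ + d * t + r ∈ A
    · simp only [Set.indicator_apply, Set.mem_preimage, harg, add_sub_cancel_left, h,
        if_true, Pi.one_apply, one_mul]
    · simp only [Set.indicator_apply, Set.mem_preimage, harg, add_sub_cancel_right, h,
        if_false, zero_mul]
  simp only [Pi.mul_apply]
  simp_rw [hinner]
  have hmeasR : ∀ t : ℝ, Measurable (fun y : ℝ => A.indicator 1 y * fR (y - (μ + d * t))) :=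
    fun t => ((measurable_one.indicator hA).mul (hmR.comp (measurable_id.sub measurable_const)))
  have hmeasT : ∀ y : ℝ, Measurable (fun t : ℝ => fT t * fR (y - (μ + d * t))) := by
    intro y
    exact hmT.mul (hmR.comp (by fun_prop))
  have hmeasP : Measurable (Function.uncurry
      fun t y : ℝ => fT t * (A.indicator 1 y * fR (y - (μ + d * t)))) := by
    have : Measurable (fun p : ℝ × ℝ => fT p.1 * (A.indicator 1 p.2 * fR (p.2 - (μ + d * p.1)))) := by
      refine (hmT.comp measurable_fst).mul ?_
      refine ((measurable_one.indicator hA).comp measurable_snd).mul ?_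
      exact hmR.comp (by fun_prop)
    exact this
  have hswap : ∫⁻ t, fT t * ∫⁻ y, A.indicator 1 y * fR (y - (μ + d * t))
      = ∫⁻ y, A.indicator 1 y * ∫⁻ t, fT t * fR (y - (μ + d * t)) := by
    calc ∫⁻ t, fT t * ∫⁻ y, A.indicator 1 y * fR (y - (μ + d * t))
        = ∫⁻ t, ∫⁻ y, fT t * (A.indicator 1 y * fR (y - (μ + d * t))) := by
          exact lintegral_congr fun t => (lintegral_const_mul _ (hmeasR t)).symm
      _ = ∫⁻ y, ∫⁻ t, fT t * (A.indicator 1 y * fR (y - (μ + d * t))) :=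
          lintegral_lintegral_swap hmeasP.aemeasurable
      _ = ∫⁻ y, A.indicator 1 y * ∫⁻ t, fT t * fR (y - (μ + d * t)) := by
          refine lintegral_congr fun y => ?_
          rw [← lintegral_const_mul _ (hmeasT y)]
          exact lintegral_congr fun t => by ring
  rw [hswap]
  have hpoint : ∀ y : ℝ, ∫⁻ t, fT t * fR (y - (μ + d * t))
      = ENNReal.ofReal (2 * normalPDF μ (ψ + d ^ 2) y *
          stdNormalCDF (d * (y - μ) / Real.sqrt (ψ * (ψ + d ^ 2)))) := by
    intro y
    have h1 : ∀ t : ℝ, fT t * fR (y - (μ + d * t))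
        = ENNReal.ofReal ((if 0 < t then 2 * normalPDF 0 1 t else 0)
            * normalPDF 0 ψ ((y - μ) - d * t)) := by
      intro t
      have hnn : 0 ≤ (if 0 < t then 2 * normalPDF 0 1 t else 0) := by
        split
        · have := normalPDF_nonneg 0 1 t zero_le_one
          positivity
        · exact le_refl 0
      have harg : y - (μ + d * t) = (y - μ) - d * t := by ring
      simp only [hfT, hfR, harg]
      rw [← ENNReal.ofReal_mul hnn]
    simp_rw [h1]
    rw [half_density_eq ψ d hψ (y - μ)]
    have h2 : normalPDF 0 (ψ + d ^ 2) (y - μ) = normalPDF μ (ψ + d ^ 2) y := by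
      rw [normalPDF, normalPDF]
      norm_num
    rw [h2]
  simp_rw [hpoint]
  have hfinal : ∀ y : ℝ, A.indicator 1 y * ENNReal.ofReal (2 * normalPDF μ (ψ + d ^ 2) y *
          stdNormalCDF (d * (y - μ) / Real.sqrt (ψ * (ψ + d ^ 2))))
      = A.indicator (fun y => ENNReal.ofReal (2 * normalPDF μ (ψ + d ^ 2) y *
          stdNormalCDF (d * (y - μ) / Real.sqrt (ψ * (ψ + d ^ 2))))) y := by
    intro y
    by_cases h : y ∈ A <;> simp [h]
  simp_rw [hfinal]
  rw [lintegral_indicator hA _]
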